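/- Covariance of STFT under A-translation and A-modulation: for f, g ∈ L²(ℝ) and ξ, η ∈ ℝ, V_g(T_ξ^A M_η^A f)(x, ω) = ρ_A(−η) e^{−2πiξω} V_g f(x − ξ, ω + (aξ − η)/b), where T_ξ^A f(t) = e^{−2πi(a/b)ξ(t−ξ)}f(t−ξ), M_η^A f(t) = e^{(πi/b)(aη² − 2pη + 2ηt)} f(t), ρ_A(t) = e^{(πi/b)(at²+2pt)}. In particular |V_g(T_ξ^A M_η^A f)(x,ω)| = |V_g f(x−ξ, ω + (aξ−η)/b)|. -/

import Mathlib

open MeasureTheory Complex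

noncomputable def STFT (g f : ℝ → ℂ) (x ω : ℝ) : ℂ :=
  ∫ t : ℝ, f t * (starRingEnd ℂ) (g (t - x)) * Complex.exp (-2 * Real.pi * Complex.I * ω * t)

noncomputable def rhoA (a b p : ℝ) (t : ℝ) : ℂ :=
  Complex.exp ((Real.pi * Complex.I / b) * (a * t ^ 2 + 2 * p * t))

/-- Covariance of the STFT under A-translation and A-modulation. -/
theorem STFT_A_covariance (a b p : ℝ) (hb : b ≠ 0) (f g : ℝ → ℂ)
    (hf : MemLp f 2 volume) (hg : MemLp g 2 volume) (ξ η x ω : ℝ) :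
    STFT g
        (fun t => Complex.exp (-2 * Real.pi * Complex.I * (a / b) * ξ * (t - ξ)) *
          (Complex.exp ((Real.pi * Complex.I / b) *
            (a * η ^ 2 - 2 * p * η + 2 * η * (t - ξ))) * f (t - ξ))) x ω =
      rhoA a b p (-η) * Complex.exp (-2 * Real.pi * Complex.I * ξ * ω) *
        STFT g f (x - ξ) (ω + (a * ξ - η) / b) ∧
    ‖STFT g
        (fun t => Complex.exp (-2 * Real.pi * Complex.I * (a / b) * ξ * (t - ξ)) *
          (Complex.exp ((Real.pi * Complex.I / b) *
            (a * η ^ 2 - 2 * p * η + 2 * η * (t - ξ))) * f (t - ξ))) x ω‖ =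
      ‖STFT g f (x - ξ) (ω + (a * ξ - η) / b)‖ := by
  have key : STFT g
        (fun t => Complex.exp (-2 * Real.pi * Complex.I * (a / b) * ξ * (t - ξ)) *
          (Complex.exp ((Real.pi * Complex.I / b) *
            (a * η ^ 2 - 2 * p * η + 2 * η * (t - ξ))) * f (t - ξ))) x ω =
      rhoA a b p (-η) * Complex.exp (-2 * Real.pi * Complex.I * ξ * ω) *
        STFT g f (x - ξ) (ω + (a * ξ - η) / b) := by
    unfold STFT rhoA
    rw [← MeasureTheory.integral_add_right_eq_self (μ := volume) _ ξ, mul_assoc,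
      ← MeasureTheory.integral_const_mul]
    congr 1
    funext t
    beta_reduce
    have h1 : t + ξ - ξ = t := by ring
    have h2 : t + ξ - x = t - (x - ξ) := by ring
    rw [h1, h2]
    have hexp : Complex.exp (-2 * (Real.pi:ℂ) * Complex.I * ((a:ℂ) / (b:ℂ) * (ξ:ℂ)) * (((t+ξ:ℝ):ℂ) - (ξ:ℂ))) *
        Complex.exp ((Real.pi:ℂ) * Complex.I / (b:ℂ) * ((a:ℂ) * (η:ℂ) ^ 2 - 2 * (p:ℂ) * (η:ℂ) + 2 * (η:ℂ) * (((t+ξ:ℝ):ℂ) - (ξ:ℂ)))) *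
        Complex.exp (-2 * (Real.pi:ℂ) * Complex.I * (ω:ℂ) * ((t + ξ : ℝ):ℂ)) =
        Complex.exp ((Real.pi:ℂ) * Complex.I / (b:ℂ) * ((a:ℂ) * ((-η:ℝ):ℂ) ^ 2 + 2 * (p:ℂ) * ((-η:ℝ):ℂ))) *
        Complex.exp (-2 * (Real.pi:ℂ) * Complex.I * (ξ:ℂ) * (ω:ℂ)) *
        Complex.exp (-2 * (Real.pi:ℂ) * Complex.I * ((ω + (a * ξ - η) / b : ℝ):ℂ) * (t:ℂ)) := by
      rw [← Complex.exp_add, ← Complex.exp_add, ← Complex.exp_add, ← Complex.exp_add]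
      congr 1
      push_cast
      field_simp
      ring
    linear_combination (f t * (starRingEnd ℂ) (g (t - (x - ξ)))) * hexp
  refine ⟨key, ?_⟩
  rw [key, norm_mul, norm_mul]
  have h1 : ‖rhoA a b p (-η)‖ = 1 := by
    unfold rhoA
    have : ((Real.pi : ℂ) * Complex.I / (b : ℂ) *
        ((a : ℂ) * ((-η : ℝ) : ℂ) ^ 2 + 2 * (p : ℂ) * ((-η : ℝ) : ℂ))) =
        ((Real.pi / b * (a * (-η) ^ 2 + 2 * p * (-η)) : ℝ) : ℂ) * Complex.I := by
      push_cast; ring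
    rw [this, Complex.norm_exp_ofReal_mul_I]
  have h2 : ‖Complex.exp (-2 * (Real.pi : ℂ) * Complex.I * (ξ : ℂ) * (ω : ℂ))‖ = 1 := by
    have : (-2 * (Real.pi : ℂ) * Complex.I * (ξ : ℂ) * (ω : ℂ)) =
        ((-2 * Real.pi * ξ * ω : ℝ) : ℂ) * Complex.I := by push_cast; ring
    rw [this, Complex.norm_exp_ofReal_mul_I]
  rw [h1, h2]
  ring
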